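/- The lex-optimal ratios are sharing-equilibrium ratios: if r* ∈ A is lex-optimal, then there exists an allocation d : N × N → ℝ with d_{ij} ≥ 0, d_{ij} = 0 whenever (i,j) ∉ E, Σ_{j∈N_i} d_{ij} = D_i for every i, and Σ_{j∈N_i} d_{ji} = r*_i for every i, and furthermore every node gives only to its neighbors of smallest sharing ratio: whenever d_{ij} > 0, it holds that ρ_j(r*) = min_{k∈N_i} ρ_k(r*). -/

import Mathlib

open Finset
open scoped Classical

noncomputable section

namespace SharingEcon

variable {V : Type*} [Fintype V] [DecidableEq V]

/-- The set of neighbors of a set of nodes: `N_S = ⋃ i ∈ S, N_i`. -/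
def nbrs (G : SimpleGraph V) [DecidableRel G.Adj] (S : Finset V) : Finset V :=
  S.biUnion fun i => G.neighborFinset i

/-- The set function `f(S) = ∑_{j ∈ N_S} D_j`. -/
def fS (G : SimpleGraph V) [DecidableRel G.Adj] (D : V → ℝ) (S : Finset V) : ℝ :=
  ∑ j ∈ nbrs G S, D j

/-- The polymatroid polyhedron `A` of a set function `f`. -/
def polyA (f : Finset V → ℝ) : Set (V → ℝ) :=
  {r | (∀ i, 0 ≤ r i) ∧ ∀ S : Finset V, ∑ i ∈ S, r i ≤ f S}

/-- The base `A₀` of the polymatroid. -/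
def polyBase (f : Finset V → ℝ) : Set (V → ℝ) :=
  {r | r ∈ polyA f ∧ ∑ i, r i = f Finset.univ}

/-- The coordinates of a vector sorted in nondecreasing order. -/
def sortedVec (x : V → ℝ) : List ℝ :=
  (Finset.univ.val.map x).sort (· ≤ ·)

/-- `x` is lexicographically at least `y` (comparing sorted coordinate vectors). -/
def lexGE (x y : V → ℝ) : Prop :=
  sortedVec x = sortedVec y ∨
    ∃ k : ℕ, (∀ j < k, (sortedVec x).getD j 0 = (sortedVec y).getD j 0) ∧
      (sortedVec y).getD k 0 < (sortedVec x).getD k 0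

/-- `r` is lexicographically optimal in `A` for the sharing-ratio vectors `(r i / D i)`. -/
def LexOptimal (A : Set (V → ℝ)) (D : V → ℝ) (r : V → ℝ) : Prop :=
  r ∈ A ∧ ∀ r' ∈ A, lexGE (fun i => r i / D i) (fun i => r' i / D i)

/-- The sharing ratio of node `i`. -/
def ratio (D r : V → ℝ) (i : V) : ℝ := r i / D i

/-- The distinct values of the sharing ratios, sorted increasingly. -/
def vals (D r : V → ℝ) : List ℝ :=
  (Finset.univ.image (ratio D r)).sort (· ≤ ·)

/-- The number `K(r)` of distinct sharing-ratio values. -/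
def numLevels (D r : V → ℝ) : ℕ := (vals D r).length

/-- The `k`-th smallest distinct ratio value `v_k(r)` (1-indexed). -/
def v (D r : V → ℝ) (k : ℕ) : ℝ := (vals D r).getD (k - 1) 0

/-- The `k`-th level set `L_k(r)` (1-indexed). -/
def level (D r : V → ℝ) (k : ℕ) : Finset V :=
  Finset.univ.filter fun i => ratio D r i = v D r k

end SharingEcon
namespace SharingEcon


section Aux
variable {V : Type*} [Fintype V] [DecidableEq V]


lemma sorted_lex_aux (a : ℝ) :
    ∀ (L M : List ℝ), L.Pairwise (· ≤ ·) → M.Pairwise (· ≤ ·) → L.length = M.length →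
    L.filter (fun x => decide (x < a)) = M.filter (fun x => decide (x < a)) →
    M.count a < L.count a →
    ∃ p, (∀ j < p, L.getD j 0 = M.getD j 0) ∧ L.getD p 0 < M.getD p 0 := by
  intro L
  induction L with
  | nil => intro M _ _ _ _ hc; simp at hc
  | cons h L' IH =>
    intro M hLs hMs hlen hfil hc
    match M with
    | [] => simp at hlen
    | h2 :: M' =>
      by_cases hhh : h = h2
      · subst hhh
        have hLs' := (List.pairwise_cons.mp hLs).2
        have hMs' := (List.pairwise_cons.mp hMs).2
        have hlen' : L'.length = M'.length := by simpa using hlen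
        have hfil' : L'.filter (fun x => decide (x < a)) = M'.filter (fun x => decide (x < a)) := by
          by_cases hha : h < a
          · simp only [List.filter_cons, hha, decide_true] at hfil
            exact (List.cons.injEq _ _ _ _ ▸ hfil).2
          · simpa only [List.filter_cons, hha, decide_false, Bool.false_eq_true, if_false] using hfil
        have hc' : M'.count a < L'.count a := by
          simp only [List.count_cons] at hc
          by_cases hha : h = a <;> simp [hha] at hc <;> omega
        obtain ⟨p, hpre, hlt⟩ := IH M' hLs' hMs' hlen' hfil' hc'
        refine ⟨p + 1, ?_, by simpa using hlt⟩
        intro j hj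
        match j with
        | 0 => rfl
        | j + 1 => simpa using hpre j (by omega)
      · -- heads differ; show h = a < h2
        have hLmin : ∀ x ∈ h :: L', h ≤ x := by
          intro x hx
          rcases List.mem_cons.mp hx with h1 | h1
          · exact le_of_eq h1.symm
          · exact (List.pairwise_cons.mp hLs).1 x h1
        have hMmin : ∀ x ∈ h2 :: M', h2 ≤ x := by
          intro x hx
          rcases List.mem_cons.mp hx with h1 | h1
          · exact le_of_eq h1.symm
          · exact (List.pairwise_cons.mp hMs).1 x h1
        have hna : ¬ h < a := by
          intro hha
          have hmem : h ∈ (h2 :: M').filter (fun x => decide (x < a)) := by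
            rw [← hfil]; simp [hha]
          have h2h : h2 ≤ h := hMmin h (List.mem_of_mem_filter hmem)
          have hmem2 : h2 ∈ (h :: L').filter (fun x => decide (x < a)) := by
            rw [hfil]; simp [lt_of_le_of_lt h2h hha]
          have : h ≤ h2 := hLmin h2 (List.mem_of_mem_filter hmem2)
          exact hhh (le_antisymm this h2h)
        have hmemL : a ∈ h :: L' := List.count_pos_iff.mp (by omega)
        have hha : h = a := le_antisymm (hLmin a hmemL) (not_lt.mp hna)
        have hna2 : ¬ h2 < a := by
          intro hha2
          have hmem : h2 ∈ (h :: L').filter (fun x => decide (x < a)) := by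
            rw [hfil]; simp [hha2]
          have : h ≤ h2 := hLmin h2 (List.mem_of_mem_filter hmem)
          exact hna (lt_of_le_of_lt this hha2)
        refine ⟨0, by simp, ?_⟩
        simp only [List.getD_cons_zero]
        rcases lt_or_eq_of_le (not_lt.mp hna2) with h1 | h1
        · exact hha ▸ h1
        · exact absurd (hha.trans h1) hhh

lemma not_lexGE_of_multiset (x y : V → ℝ) (a : ℝ)
    (hf : (Finset.univ.val.map x).filter (· < a) = (Finset.univ.val.map y).filter (· < a))
    (hc : (Finset.univ.val.map y).count a < (Finset.univ.val.map x).count a) :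
    ¬ lexGE x y := by
  set L := sortedVec x with hL
  set M := sortedVec y with hM
  have hLs : L.Pairwise (· ≤ ·) := Multiset.pairwise_sort _ _
  have hMs : M.Pairwise (· ≤ ·) := Multiset.pairwise_sort _ _
  have hLco : (↑L : Multiset ℝ) = Finset.univ.val.map x := Multiset.sort_eq _ _
  have hMco : (↑M : Multiset ℝ) = Finset.univ.val.map y := Multiset.sort_eq _ _
  have hlen : L.length = M.length := by
    rw [hL, hM, sortedVec, sortedVec, Multiset.length_sort, Multiset.length_sort,
      Multiset.card_map, Multiset.card_map]
  have hfil : L.filter (fun x => decide (x < a)) = M.filter (fun x => decide (x < a)) := by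
    have h1 : ((L.filter (fun x => decide (x < a)) : List ℝ) : Multiset ℝ)
        = ((M.filter (fun x => decide (x < a)) : List ℝ) : Multiset ℝ) := by
      rw [← Multiset.filter_coe (fun x => x < a), ← Multiset.filter_coe (fun x => x < a),
        hLco, hMco]
      exact hf
    exact List.Perm.eq_of_pairwise' (hLs.filter _) (hMs.filter _)
      (Multiset.coe_eq_coe.mp h1)
  have hcnt : M.count a < L.count a := by
    have h1 : Multiset.count a ↑M < Multiset.count a ↑L := by rw [hLco, hMco]; exact hc
    rwa [Multiset.coe_count, Multiset.coe_count] at h1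
  obtain ⟨p, hpre, hlt⟩ := sorted_lex_aux a L M hLs hMs hlen hfil hcnt
  rintro (heq | ⟨k, hkpre, hklt⟩)
  · rw [← hL, ← hM] at heq
    rw [heq] at hlt; exact lt_irrefl _ hlt
  · rw [← hL, ← hM] at hkpre hklt
    rcases lt_trichotomy k p with h1 | h1 | h1
    · exact absurd (hpre k h1) (ne_of_gt hklt)
    · subst h1; exact lt_irrefl _ (hlt.trans hklt)
    · exact absurd (hkpre p h1) (ne_of_lt hlt)

lemma not_lexGE_single (x y : V → ℝ) (i : V) (hgt : x i < y i)
    (hoff : ∀ k, k ≠ i → y k = x k) : ¬ lexGE x y := by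
  set a := x i with ha
  have hnd : (Finset.univ.val : Multiset V).Nodup := Finset.univ.nodup
  have hsplit : (Finset.univ.val : Multiset V) = i ::ₘ Finset.univ.val.erase i :=
    (Multiset.cons_erase (Finset.mem_univ i)).symm
  have hrest : (Finset.univ.val.erase i).map y = (Finset.univ.val.erase i).map x := by
    apply Multiset.map_congr rfl
    intro k hk
    exact hoff k (hnd.mem_erase_iff.mp hk).1
  have hmx : Finset.univ.val.map x = a ::ₘ (Finset.univ.val.erase i).map x := by
    conv_lhs => rw [hsplit]
    rw [Multiset.map_cons, ← ha]
  have hmy : Finset.univ.val.map y = y i ::ₘ (Finset.univ.val.erase i).map x := by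
    conv_lhs => rw [hsplit]
    rw [Multiset.map_cons, hrest]
  apply not_lexGE_of_multiset x y a
  · rw [hmx, hmy, Multiset.filter_cons_of_neg _ (by simp), Multiset.filter_cons_of_neg]
    simp only [not_lt]
    exact le_of_lt hgt
  · rw [hmx, hmy, Multiset.count_cons_self, Multiset.count_cons_of_ne (ne_of_lt hgt)]
    omega
lemma not_lexGE_pair (x y : V → ℝ) (j j' : V) (hjj : j ≠ j')
    (h1 : x j' < y j') (h2 : x j' < x j) (h3 : x j' < y j)
    (hoff : ∀ k, k ≠ j → k ≠ j' → y k = x k) : ¬ lexGE x y := by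
  set a := x j' with ha
  have hnd : (Finset.univ.val : Multiset V).Nodup := Finset.univ.nodup
  have hnd2 : (Finset.univ.val.erase j').Nodup := hnd.erase _
  have hs1 : (Finset.univ.val : Multiset V) = j' ::ₘ Finset.univ.val.erase j' :=
    (Multiset.cons_erase (Finset.mem_univ j')).symm
  have hjmem : j ∈ Finset.univ.val.erase j' := hnd.mem_erase_iff.mpr ⟨hjj, Finset.mem_univ j⟩
  have hs2 : Finset.univ.val.erase j' = j ::ₘ (Finset.univ.val.erase j').erase j :=
    (Multiset.cons_erase hjmem).symm
  set rest := (Finset.univ.val.erase j').erase j with hrest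
  have hrs : rest.map y = rest.map x := by
    apply Multiset.map_congr rfl
    intro k hk
    have hk1 := (hnd2.mem_erase_iff.mp hk)
    exact hoff k hk1.1 (hnd.mem_erase_iff.mp hk1.2).1
  have hmx : Finset.univ.val.map x = a ::ₘ x j ::ₘ rest.map x := by
    conv_lhs => rw [hs1, hs2]
    rw [Multiset.map_cons, Multiset.map_cons, ← ha]
  have hmy : Finset.univ.val.map y = y j' ::ₘ y j ::ₘ rest.map x := by
    conv_lhs => rw [hs1, hs2]
    rw [Multiset.map_cons, Multiset.map_cons, hrs]
  apply not_lexGE_of_multiset x y a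
  · rw [hmx, hmy, Multiset.filter_cons_of_neg _ (by simp),
      Multiset.filter_cons_of_neg _ (by simp [not_lt, le_of_lt h2]),
      Multiset.filter_cons_of_neg _ (by simp [not_lt, le_of_lt h1]),
      Multiset.filter_cons_of_neg _ (by simp [not_lt, le_of_lt h3])]
  · rw [hmx, hmy, Multiset.count_cons_self, Multiset.count_cons_of_ne (ne_of_lt h2),
      Multiset.count_cons_of_ne (ne_of_lt h1), Multiset.count_cons_of_ne (ne_of_lt h3)]
    omega

def Feas (G : SimpleGraph V) [DecidableRel G.Adj] (D r : V → ℝ) (d : V → V → ℝ) : Prop :=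
  (∀ i j, 0 ≤ d i j) ∧ (∀ i j, ¬ G.Adj i j → d i j = 0) ∧
  (∀ i, ∑ j, d i j ≤ D i) ∧ (∀ j, ∑ i, d i j ≤ r j)

inductive Reach (G : SimpleGraph V) [DecidableRel G.Adj] (d : V → V → ℝ) (j0 : V) : V → Prop
  | base : Reach G d j0 j0
  | step {j i j' : V} : Reach G d j0 j → G.Adj i j → 0 < d i j' → Reach G d j0 j'

lemma pull (G : SimpleGraph V) [DecidableRel G.Adj] (D r : V → ℝ)
    (d : V → V → ℝ) (hd : Feas G D r d) (j0 : V) (hdef : ∑ i, d i j0 < r j0)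
    (j : V) (hreach : Reach G d j0 j) :
    ∃ C ε₀ : ℝ, 0 ≤ C ∧ 0 < ε₀ ∧ ∀ δ : ℝ, 0 ≤ δ → δ ≤ ε₀ →
      ∃ d' : V → V → ℝ, Feas G D r d' ∧
        (∀ a, ∑ b, d' a b = ∑ b, d a b) ∧
        (∀ b, ∑ a, d' a b = ∑ a, d a b - (if b = j then δ else 0) + (if b = j0 then δ else 0)) ∧
        (∀ a b, d a b - C * δ ≤ d' a b) := by
  induction hreach with
  | base =>
      refine ⟨0, 1, le_refl 0, one_pos, fun δ h0 h1 => ⟨d, hd, fun a => rfl, fun b => by split_ifs <;> ring, fun a b => by simp⟩⟩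
  | @step j i j' hre hadj hpos ih =>
      obtain ⟨C, ε₀, hC0, hε₀, hQ⟩ := ih
      by_cases hjj : j = j'
      · subst hjj; exact ⟨C, ε₀, hC0, hε₀, hQ⟩
      refine ⟨C + 1, min ε₀ (min (d i j' / (C + 1)) (r j0 - ∑ a, d a j0)), by linarith, ?_, ?_⟩
      · refine lt_min hε₀ (lt_min ?_ (by linarith))
        exact div_pos hpos (by linarith)
      intro δ h0 h1
      have hδε₀ : δ ≤ ε₀ := le_trans h1 (min_le_left _ _)
      have hδ2 : (C + 1) * δ ≤ d i j' := by
        have h2 : δ ≤ d i j' / (C + 1) := le_trans h1 (le_trans (min_le_right _ _) (min_le_left _ _))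
        rw [le_div_iff₀ (by linarith : (0:ℝ) < C + 1)] at h2
        linarith
      have hδ3 : δ ≤ r j0 - ∑ a, d a j0 := le_trans h1 (le_trans (min_le_right _ _) (min_le_right _ _))
      obtain ⟨d', hd'F, hd'row, hd'col, hd'pt⟩ := hQ δ h0 hδε₀
      set F : V → V → ℝ := fun a b =>
        if a = i then (if b = j then δ else 0) - (if b = j' then δ else 0) else 0 with hF
      set d'' : V → V → ℝ := fun a b => d' a b + F a b with hd''
      have hFval : ∀ a b, a = i → F a b = (if b = j then δ else 0) - (if b = j' then δ else 0) := by
        intro a b ha; simp only [hF]; rw [if_pos ha]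
      have hFval0 : ∀ a b, a ≠ i → F a b = 0 := by
        intro a b ha; simp only [hF]; rw [if_neg ha]
      have hFij' : F i j' = -δ := by
        rw [hFval i j' rfl, if_neg (fun h : (j' : V) = j => hjj h.symm), if_pos rfl]; ring
      have hFnn : ∀ a b, b ≠ j' → 0 ≤ F a b := by
        intro a b hb
        by_cases ha : a = i
        · rw [hFval a b ha, if_neg hb]
          split_ifs <;> linarith
        · rw [hFval0 a b ha]
      have hFrow : ∀ a, ∑ b, F a b = 0 := by
        intro a
        by_cases ha : a = i
        · rw [Finset.sum_congr rfl (fun b _ => hFval a b ha), Finset.sum_sub_distrib,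
            Finset.sum_ite_eq' Finset.univ j (fun _ => δ),
            Finset.sum_ite_eq' Finset.univ j' (fun _ => δ)]
          simp
        · rw [Finset.sum_congr rfl (fun b _ => hFval0 a b ha), Finset.sum_const, smul_zero]
      have hFcol : ∀ b, ∑ a, F a b = (if b = j then δ else 0) - (if b = j' then δ else 0) := by
        intro b
        have h3 : ∀ a : V, F a b
            = if a = i then ((if b = j then δ else 0) - (if b = j' then δ else 0)) else 0 := by
          intro a
          by_cases ha : a = i
          · rw [hFval a b ha, if_pos ha]
          · rw [hFval0 a b ha, if_neg ha]
        rw [Finset.sum_congr rfl (fun a _ => h3 a),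
          Finset.sum_ite_eq' Finset.univ i
            (fun _ : V => (if b = j then δ else 0) - (if b = j' then δ else 0))]
        simp
      have hdval : ∀ a b, d'' a b = d' a b + F a b := fun a b => rfl
      have hrow'' : ∀ a, ∑ b, d'' a b = ∑ b, d' a b := by
        intro a
        rw [Finset.sum_congr rfl (fun b _ => hdval a b), Finset.sum_add_distrib, hFrow a, add_zero]
      have hcol'' : ∀ b, ∑ a, d'' a b
          = ∑ a, d' a b + ((if b = j then δ else 0) - (if b = j' then δ else 0)) := by
        intro b
        rw [Finset.sum_congr rfl (fun a _ => hdval a b), Finset.sum_add_distrib, hFcol b]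
      refine ⟨d'', ⟨?_, ?_, ?_, ?_⟩, ?_, ?_, ?_⟩
      · -- nonneg
        intro a b
        have hbase := hd'F.1 a b
        rw [hdval a b]
        by_cases hab : a = i ∧ b = j'
        · obtain ⟨ha, hb⟩ := hab; subst ha; subst hb
          rw [hFij']
          have := hd'pt a b
          linarith
        · rcases not_and_or.mp hab with ha | hb
          · rw [hFval0 a b ha]; linarith
          · have := hFnn a b hb
            linarith
      · -- support
        intro a b hnadj
        have h0' := hd'F.2.1 a b hnadj
        rw [hdval a b, h0', zero_add]
        by_cases ha : a = i
        · have hbj : b ≠ j := by rintro rfl; rw [ha] at hnadj; exact hnadj hadj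
          have hbj' : b ≠ j' := by
            rintro rfl
            rw [ha] at hnadj
            refine hnadj ?_
            by_contra hna
            exact absurd (hd.2.1 i b hna) (ne_of_gt hpos)
          rw [hFval a b ha, if_neg hbj, if_neg hbj']; ring
        · exact hFval0 a b ha
      · -- rowsum ≤ D
        intro a
        rw [hrow'', hd'row a]
        exact hd.2.2.1 a
      · -- colsum ≤ r
        intro b
        have hcb : ∑ a, d'' a b
            = ∑ a, d a b + ((if b = j0 then δ else 0) - (if b = j' then δ else 0)) := by
          rw [hcol'', hd'col b]
          split_ifs <;> ring
        rw [hcb]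
        have hdrb := hd.2.2.2 b
        by_cases hb0 : b = j0
        · have hδ3' : δ ≤ r b - ∑ a, d a b := by rw [hb0]; exact hδ3
          rw [if_pos hb0]
          by_cases hb' : b = j'
          · rw [if_pos hb']; linarith
          · rw [if_neg hb']; linarith
        · rw [if_neg hb0]
          by_cases hb' : b = j'
          · rw [if_pos hb']; linarith
          · rw [if_neg hb']; linarith
      · intro a; rw [hrow'', hd'row a]
      · intro b
        rw [hcol'', hd'col b]
        split_ifs <;> ring
      · intro a b
        have h1' := hd'pt a b
        have h2' : d' a b - δ ≤ d'' a b := by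
          rw [hdval a b]
          rcases eq_or_ne b j' with hb | hb
          · subst hb
            rcases eq_or_ne a i with ha | ha
            · subst ha; rw [hFij']; linarith
            · rw [hFval0 a b ha]; linarith
          · have := hFnn a b hb; linarith
        have hCd : (C + 1) * δ = C * δ + δ := by ring
        linarith


variable (G : SimpleGraph V) [DecidableRel G.Adj]

lemma nbrs_union (S T : Finset V) : nbrs G (S ∪ T) = nbrs G S ∪ nbrs G T := by
  ext x
  simp only [nbrs, Finset.mem_biUnion, Finset.mem_union]
  constructor
  · rintro ⟨i, hi | hi, hx⟩
    · exact Or.inl ⟨i, hi, hx⟩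
    · exact Or.inr ⟨i, hi, hx⟩
  · rintro (⟨i, hi, hx⟩ | ⟨i, hi, hx⟩)
    · exact ⟨i, Or.inl hi, hx⟩
    · exact ⟨i, Or.inr hi, hx⟩

lemma nbrs_inter_subset (S T : Finset V) : nbrs G (S ∩ T) ⊆ nbrs G S ∩ nbrs G T := by
  intro x hx
  obtain ⟨i, hi, hxi⟩ := Finset.mem_biUnion.mp hx
  exact Finset.mem_inter.mpr ⟨Finset.mem_biUnion.mpr ⟨i, (Finset.mem_inter.mp hi).1, hxi⟩,
    Finset.mem_biUnion.mpr ⟨i, (Finset.mem_inter.mp hi).2, hxi⟩⟩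

lemma tight_union {D r : V → ℝ} (hD : ∀ i, 0 ≤ D i) (hr : r ∈ polyA (fS G D))
    {S T : Finset V} (hS : ∑ i ∈ S, r i = fS G D S) (hT : ∑ i ∈ T, r i = fS G D T) :
    ∑ i ∈ S ∪ T, r i = fS G D (S ∪ T) := by
  have le1 := hr.2 (S ∪ T)
  have le2 := hr.2 (S ∩ T)
  have hsub : fS G D (S ∪ T) + fS G D (S ∩ T) ≤ fS G D S + fS G D T := by
    have h1 : fS G D (S ∩ T) ≤ ∑ j ∈ nbrs G S ∩ nbrs G T, D j :=
      Finset.sum_le_sum_of_subset_of_nonneg (nbrs_inter_subset G S T) (fun i _ _ => hD i)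
    have h3 : fS G D (S ∪ T) + ∑ j ∈ nbrs G S ∩ nbrs G T, D j
        = fS G D S + fS G D T := by
      rw [fS, fS, fS, nbrs_union]; exact Finset.sum_union_inter
    linarith
  have hsum : ∑ i ∈ S ∪ T, r i + ∑ i ∈ S ∩ T, r i = ∑ i ∈ S, r i + ∑ i ∈ T, r i :=
    Finset.sum_union_inter
  linarith

lemma lexopt_base (hniso : ∀ i, (G.neighborFinset i).Nonempty)
    (D : V → ℝ) (hD : ∀ i, 0 < D i) (rstar : V → ℝ)
    (hlex : LexOptimal (polyA (fS G D)) D rstar) :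
    ∑ i, rstar i = ∑ i, D i := by
  have hmem := hlex.1
  have hch : ∀ i : V, ∃ S : Finset V, i ∈ S ∧ ∑ k ∈ S, rstar k = fS G D S := by
    intro i
    by_contra hno
    push_neg at hno
    set 𝒮 : Finset (Finset V) := Finset.univ.filter (fun S => i ∈ S) with h𝒮
    have h𝒮ne : 𝒮.Nonempty := ⟨{i}, by simp [h𝒮]⟩
    set ε := 𝒮.inf' h𝒮ne (fun S => fS G D S - ∑ k ∈ S, rstar k) with hε
    have hεpos : 0 < ε := by
      rw [hε, Finset.lt_inf'_iff]
      intro S hs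
      have hSi : i ∈ S := by simpa [h𝒮] using hs
      have := hmem.2 S
      have hne := hno S hSi
      exact sub_pos.mpr (lt_of_le_of_ne this hne)
    set r' : V → ℝ := fun k => rstar k + if k = i then ε else 0 with hr'
    have hr'mem : r' ∈ polyA (fS G D) := by
      constructor
      · intro k
        by_cases hk : k = i
        · subst hk
          have hval : r' k = rstar k + ε := by simp [hr']
          rw [hval]
          linarith [hmem.1 k, hεpos]
        · simp only [hr', if_neg hk, add_zero]
          exact hmem.1 k
      · intro S
        have hsplit : ∑ k ∈ S, r' k = ∑ k ∈ S, rstar k + if i ∈ S then ε else 0 := by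
          rw [hr', Finset.sum_add_distrib, Finset.sum_ite_eq' S i (fun _ => ε)]
        rw [hsplit]
        by_cases hiS : i ∈ S
        · have hle : ε ≤ fS G D S - ∑ k ∈ S, rstar k := by
            rw [hε]
            exact Finset.inf'_le _ (by simp [h𝒮, hiS])
          simp only [hiS, if_true]; linarith
        · simp only [hiS, if_false, add_zero]; exact hmem.2 S
    have := hlex.2 r' hr'mem
    refine not_lexGE_single (fun k => rstar k / D k) (fun k => r' k / D k) i ?_ ?_ this
    · have hri : r' i = rstar i + ε := by simp [hr']
      simp only [hri]
      rw [add_div]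
      have h0 : 0 < ε / D i := div_pos hεpos (hD i)
      linarith
    · intro k hk
      simp [hr', hk]
  choose Sc hScmem hSctight using hch
  have htightB : ∀ F : Finset V, ∑ k ∈ F.biUnion Sc, rstar k = fS G D (F.biUnion Sc) := by
    intro F
    induction F using Finset.induction_on with
    | empty => simp [fS, nbrs]
    | insert _ _ hnotmem ih =>
        rw [Finset.biUnion_insert]
        exact tight_union G (fun i => (hD i).le) hmem (hSctight _) ih
  have huniv : (Finset.univ : Finset V).biUnion Sc = Finset.univ := by
    apply Finset.eq_univ_of_forall
    intro i
    exact Finset.mem_biUnion.mpr ⟨i, Finset.mem_univ i, hScmem i⟩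
  have h1 : ∑ k, rstar k = fS G D Finset.univ := by
    have := htightB Finset.univ
    rwa [huniv] at this
  have h2 : nbrs G Finset.univ = Finset.univ := by
    apply Finset.eq_univ_of_forall
    intro i
    obtain ⟨j, hj⟩ := hniso i
    exact Finset.mem_biUnion.mpr ⟨j, Finset.mem_univ j,
      (SimpleGraph.mem_neighborFinset _ _ _).mpr ((SimpleGraph.mem_neighborFinset _ _ _).mp hj).symm⟩
  rw [h1, fS, h2]

lemma flow_exists (G : SimpleGraph V) [DecidableRel G.Adj] (D r : V → ℝ)
    (hD0 : ∀ i, 0 ≤ D i) (hr0 : ∀ i, 0 ≤ r i)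
    (hcut : ∀ S : Finset V, ∑ i ∈ S, r i ≤ fS G D S)
    (htot : ∑ i, r i = ∑ i, D i) :
    ∃ d : V → V → ℝ, Feas G D r d ∧ (∀ i, ∑ j, d i j = D i) ∧ (∀ j, ∑ i, d i j = r j) := by
  classical
  set K : Set (V → V → ℝ) := {d | Feas G D r d} with hK
  have hcont : ∀ i j, Continuous (fun d : V → V → ℝ => d i j) :=
    fun i j => (continuous_apply j).comp (continuous_apply i)
  have hKc : IsClosed K := by
    have hKeq : K = (⋂ i, ⋂ j, {d : V → V → ℝ | 0 ≤ d i j}) ∩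
        ((⋂ i, ⋂ j, {d : V → V → ℝ | ¬G.Adj i j → d i j = 0}) ∩
        ((⋂ i, {d : V → V → ℝ | ∑ j, d i j ≤ D i}) ∩
         (⋂ j, {d : V → V → ℝ | ∑ i, d i j ≤ r j}))) := by
      ext d
      simp only [hK, Set.mem_setOf_eq, Set.mem_inter_iff, Set.mem_iInter, Feas]
    rw [hKeq]
    refine IsClosed.inter ?_ (IsClosed.inter ?_ (IsClosed.inter ?_ ?_))
    · exact isClosed_iInter fun i => isClosed_iInter fun j =>
        isClosed_le continuous_const (hcont i j)
    · refine isClosed_iInter fun i => isClosed_iInter fun j => ?_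
      by_cases h : G.Adj i j
      · have : {d : V → V → ℝ | ¬G.Adj i j → d i j = 0} = Set.univ := by
          ext dd; simp [h]
        rw [this]; exact isClosed_univ
      · have : {d : V → V → ℝ | ¬G.Adj i j → d i j = 0} = {d : V → V → ℝ | d i j = 0} := by
          ext dd; simp [h]
        rw [this]; exact isClosed_eq (hcont i j) continuous_const
    · exact isClosed_iInter fun i =>
        isClosed_le (continuous_finset_sum _ fun j _ => hcont i j) continuous_const
    · exact isClosed_iInter fun j =>
        isClosed_le (continuous_finset_sum _ fun i _ => hcont i j) continuous_const
  have hsub : K ⊆ Set.Icc (fun _ _ => (0:ℝ)) (fun i _ => D i) := by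
    intro d hd
    constructor
    · rw [Pi.le_def]; intro i; rw [Pi.le_def]; intro j; exact hd.1 i j
    · rw [Pi.le_def]; intro i; rw [Pi.le_def]; intro j
      exact le_trans (Finset.single_le_sum (fun b _ => hd.1 i b) (Finset.mem_univ j))
        (hd.2.2.1 i)
  have hcompact : IsCompact K := IsCompact.of_isClosed_subset isCompact_Icc hKc hsub
  have hne : K.Nonempty := by
    refine ⟨(fun _ _ => 0), ⟨fun i j => le_refl 0, fun i j _ => rfl, ?_, ?_⟩⟩
    · intro i; simpa using hD0 i
    · intro j; simpa using hr0 j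
  have hcontTot : Continuous (fun d : V → V → ℝ => ∑ i, ∑ j, d i j) :=
    continuous_finset_sum _ fun i _ => continuous_finset_sum _ fun j _ => hcont i j
  obtain ⟨d, hdK, hdmax⟩ := hcompact.exists_isMaxOn hne hcontTot.continuousOn
  have hdF : Feas G D r d := hdK
  have hcol : ∀ j, ∑ i, d i j = r j := by
    by_contra hnc
    push_neg at hnc
    obtain ⟨j0, hj0⟩ := hnc
    have hdef : ∑ i, d i j0 < r j0 := lt_of_le_of_ne (hdF.2.2.2 j0) hj0
    by_cases hcase : ∃ p q, G.Adj p q ∧ Reach G d j0 q ∧ ∑ b, d p b < D p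
    · obtain ⟨p, q, hpq, hq, hrowp⟩ := hcase
      obtain ⟨C, ε₀, hC0, hε₀, hQ⟩ := pull G D r d hdF j0 hdef q hq
      set δ := min ε₀ (min (D p - ∑ b, d p b) (r j0 - ∑ a, d a j0)) with hδ
      have hδp1 : δ ≤ D p - ∑ b, d p b := le_trans (min_le_right _ _) (min_le_left _ _)
      have hδp2 : δ ≤ r j0 - ∑ a, d a j0 := le_trans (min_le_right _ _) (min_le_right _ _)
      have hδpos : 0 < δ := lt_min hε₀ (lt_min (by linarith) (by linarith))
      obtain ⟨d', hd'F, hd'row, hd'col, _⟩ := hQ δ hδpos.le (min_le_left _ _)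
      set d'' : V → V → ℝ := fun a b =>
        d' a b + (if a = p then (if b = q then δ else 0) else 0) with hd''2
      have hd''val : ∀ a b, d'' a b = d' a b + (if a = p then (if b = q then δ else 0) else 0) :=
        fun _ _ => rfl
      have hite_nn : ∀ a b, (0:ℝ) ≤ (if a = p then (if b = q then δ else 0) else 0) := by
        intro a b; split_ifs <;> linarith
      have hrow2 : ∀ a, ∑ b, d'' a b = ∑ b, d' a b + (if a = p then δ else 0) := by
        intro a
        rw [Finset.sum_congr rfl (fun b (_ : b ∈ Finset.univ) => hd''val a b),
          Finset.sum_add_distrib]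
        congr 1
        by_cases ha : a = p
        · rw [Finset.sum_congr rfl (fun b (_ : b ∈ Finset.univ) => if_pos ha), if_pos ha,
            Finset.sum_ite_eq' Finset.univ q (fun _ => δ)]
          simp
        · rw [Finset.sum_congr rfl (fun b (_ : b ∈ Finset.univ) => if_neg ha), if_neg ha,
            Finset.sum_const, smul_zero]
      have hcol2 : ∀ b, ∑ a, d'' a b = ∑ a, d' a b + (if b = q then δ else 0) := by
        intro b
        rw [Finset.sum_congr rfl (fun a (_ : a ∈ Finset.univ) => hd''val a b),
          Finset.sum_add_distrib]
        congr 1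
        rw [Finset.sum_ite_eq' Finset.univ p (fun _ => (if b = q then δ else 0))]
        simp
      have hd''F : Feas G D r d'' := by
        refine ⟨?_, ?_, ?_, ?_⟩
        · intro a b
          have := hd'F.1 a b
          have := hite_nn a b
          rw [hd''val a b]; linarith
        · intro a b hnadj
          rw [hd''val a b, hd'F.2.1 a b hnadj, zero_add]
          by_cases ha : a = p
          · have hbq : b ≠ q := by rintro rfl; rw [ha] at hnadj; exact hnadj hpq
            rw [if_pos ha, if_neg hbq]
          · rw [if_neg ha]
        · intro a
          rw [hrow2 a, hd'row a]
          by_cases ha : a = p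
          · rw [if_pos ha, ha]; linarith
          · rw [if_neg ha, add_zero]; exact hdF.2.2.1 a
        · intro b
          rw [hcol2 b, hd'col b]
          by_cases hbq : b = q <;> by_cases hb0 : b = j0
          · rw [if_pos hbq, if_pos hb0]
            subst hb0
            linarith [hδp2]
          · rw [if_pos hbq, if_neg hb0]
            linarith [hdF.2.2.2 b]
          · rw [if_neg hbq, if_pos hb0]
            subst hb0
            linarith [hδp2]
          · rw [if_neg hbq, if_neg hb0]
            linarith [hdF.2.2.2 b]
      have htotgt : ∑ a, ∑ b, d a b < ∑ a, ∑ b, d'' a b := by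
        have e1 : ∑ a, ∑ b, d'' a b
            = ∑ a, (∑ b, d' a b + (if a = p then δ else 0)) :=
          Finset.sum_congr rfl (fun a _ => hrow2 a)
        rw [e1, Finset.sum_add_distrib, Finset.sum_ite_eq' Finset.univ p (fun _ => δ)]
        have e2 : ∑ a, ∑ b, d' a b = ∑ a, ∑ b, d a b :=
          Finset.sum_congr rfl (fun a _ => hd'row a)
        rw [e2]
        simp only [Finset.mem_univ, if_true]
        linarith
      exact absurd (hdmax hd''F) (by simp only [hK, Set.mem_setOf_eq]; linarith)
    · push_neg at hcase
      set T : Finset V := Finset.univ.filter (fun b => Reach G d j0 b) with hT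
      have hj0T : j0 ∈ T := by
        rw [hT, Finset.mem_filter]; exact ⟨Finset.mem_univ _, Reach.base⟩
      have hmemT : ∀ b, Reach G d j0 b → b ∈ T := by
        intro b hb; rw [hT, Finset.mem_filter]; exact ⟨Finset.mem_univ _, hb⟩
      have key : ∑ p ∈ nbrs G T, D p < ∑ b ∈ T, r b := by
        have e1 : ∑ p ∈ nbrs G T, D p = ∑ p ∈ nbrs G T, ∑ b ∈ T, d p b := by
          refine Finset.sum_congr rfl (fun p hp => ?_)
          obtain ⟨q, hqT, hpq⟩ := Finset.mem_biUnion.mp hp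
          have hadjpq : G.Adj p q := ((SimpleGraph.mem_neighborFinset _ _ _).mp hpq).symm
          have hqre : Reach G d j0 q := (Finset.mem_filter.mp hqT).2
          have hsat : ∑ b, d p b = D p :=
            le_antisymm (hdF.2.2.1 p) (hcase p q hadjpq hqre)
          rw [← hsat]
          symm
          apply Finset.sum_subset (Finset.subset_univ T)
          intro x _ hx
          by_contra hne0
          have hpos : 0 < d p x := lt_of_le_of_ne (hdF.1 p x) (Ne.symm hne0)
          exact hx (hmemT x (Reach.step hqre hadjpq hpos))
        have e3 : ∀ b ∈ T, ∑ p ∈ nbrs G T, d p b = ∑ p, d p b := by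
          intro b hb
          apply Finset.sum_subset (Finset.subset_univ (nbrs G T))
          intro x _ hx
          by_contra hne0
          have hadjxb : G.Adj x b := by
            by_contra hna
            exact hne0 (hdF.2.1 x b hna)
          exact hx (Finset.mem_biUnion.mpr ⟨b, hb,
            (SimpleGraph.mem_neighborFinset _ _ _).mpr hadjxb.symm⟩)
        have e4 : ∑ b ∈ T, ∑ p, d p b < ∑ b ∈ T, r b :=
          Finset.sum_lt_sum (fun b _ => hdF.2.2.2 b) ⟨j0, hj0T, hdef⟩
        calc ∑ p ∈ nbrs G T, D p = ∑ p ∈ nbrs G T, ∑ b ∈ T, d p b := e1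
          _ = ∑ b ∈ T, ∑ p ∈ nbrs G T, d p b := Finset.sum_comm
          _ = ∑ b ∈ T, ∑ p, d p b := Finset.sum_congr rfl e3
          _ < ∑ b ∈ T, r b := e4
      have := hcut T
      rw [fS] at this
      linarith
  have htotflow : ∑ i, ∑ b, d i b = ∑ i, D i := by
    rw [Finset.sum_comm]
    rw [Finset.sum_congr rfl (fun j (_ : j ∈ Finset.univ) => hcol j)]
    exact htot
  have hrowall : ∀ i, ∑ b, d i b = D i := by
    have h := (Finset.sum_eq_sum_iff_of_le (fun i (_ : i ∈ Finset.univ) => hdF.2.2.1 i)).mp htotflow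
    exact fun i => h i (Finset.mem_univ i)
  exact ⟨d, hdF, hrowall, hcol⟩

lemma flow_le (d : V → V → ℝ) (D : V → ℝ)
    (hnn : ∀ a b, 0 ≤ d a b) (hsupp : ∀ a b, ¬ G.Adj a b → d a b = 0)
    (hrow : ∀ a, ∑ b, d a b ≤ D a) (S : Finset V) :
    ∑ k ∈ S, (∑ p, d p k) ≤ fS G D S := by
  have e1 : ∑ k ∈ S, ∑ p, d p k = ∑ p, ∑ k ∈ S, d p k := Finset.sum_comm
  have e2 : ∑ p, ∑ k ∈ S, d p k = ∑ p ∈ nbrs G S, ∑ k ∈ S, d p k := by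
    symm
    apply Finset.sum_subset (Finset.subset_univ _)
    intro p _ hp
    apply Finset.sum_eq_zero
    intro k hk
    by_contra hne0
    have hadj : G.Adj p k := by
      by_contra hna
      exact hne0 (hsupp p k hna)
    exact hp (Finset.mem_biUnion.mpr ⟨k, hk,
      (SimpleGraph.mem_neighborFinset _ _ _).mpr hadj.symm⟩)
  have e3 : ∑ p ∈ nbrs G S, ∑ k ∈ S, d p k ≤ ∑ p ∈ nbrs G S, D p := by
    apply Finset.sum_le_sum
    intro p _
    exact le_trans (Finset.sum_le_sum_of_subset_of_nonneg (Finset.subset_univ S)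
      (fun k _ _ => hnn p k)) (hrow p)
  rw [e1, e2]
  exact e3

end Aux

/-- lex-optimal ratios are sharing-equilibrium ratios: there is an allocation
generating `r*` in which every node distributes its whole endowment, and gives only to
neighbors of smallest sharing ratio. -/
theorem lexopt_is_sharing_equilibrium {V : Type*} [Fintype V] [DecidableEq V]
    (G : SimpleGraph V) [DecidableRel G.Adj]
    (hconn : G.Connected) (hniso : ∀ i, (G.neighborFinset i).Nonempty)
    (D : V → ℝ) (hD : ∀ i, 0 < D i)
    (rstar : V → ℝ) (hlex : LexOptimal (polyA (fS G D)) D rstar) :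
    ∃ d : V → V → ℝ,
      (∀ i j, 0 ≤ d i j) ∧
      (∀ i j, ¬ G.Adj i j → d i j = 0) ∧
      (∀ i, ∑ j ∈ G.neighborFinset i, d i j = D i) ∧
      (∀ i, ∑ j ∈ G.neighborFinset i, d j i = rstar i) ∧
      (∀ i j, 0 < d i j →
        ratio D rstar j = (G.neighborFinset i).inf' (hniso i) (ratio D rstar)) := by
  classical
  have hr0 : ∀ i, 0 ≤ rstar i := hlex.1.1
  have hcut : ∀ S : Finset V, ∑ i ∈ S, rstar i ≤ fS G D S := hlex.1.2
  have hD0 : ∀ i, 0 ≤ D i := fun i => (hD i).le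
  have hsum : ∑ i, rstar i = ∑ i, D i := lexopt_base G hniso D hD rstar hlex
  obtain ⟨d, hdF, hrowD, hcolR⟩ := flow_exists G D rstar hD0 hr0 hcut hsum
  refine ⟨d, hdF.1, hdF.2.1, ?_, ?_, ?_⟩
  · intro i
    rw [← hrowD i]
    apply Finset.sum_subset (Finset.subset_univ _)
    intro x _ hx
    exact hdF.2.1 i x (fun hadj => hx ((SimpleGraph.mem_neighborFinset _ _ _).mpr hadj))
  · intro i
    rw [← hcolR i]
    apply Finset.sum_subset (Finset.subset_univ _)
    intro x _ hx
    exact hdF.2.1 x i (fun hadj => hx ((SimpleGraph.mem_neighborFinset _ _ _).mpr hadj.symm))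
  · intro i j hpos
    have hadjij : G.Adj i j := by
      by_contra hna
      exact absurd (hdF.2.1 i j hna) (ne_of_gt hpos)
    have hjmem : j ∈ G.neighborFinset i := (SimpleGraph.mem_neighborFinset _ _ _).mpr hadjij
    by_contra hne
    have hlt : (G.neighborFinset i).inf' (hniso i) (ratio D rstar) < ratio D rstar j :=
      lt_of_le_of_ne (Finset.inf'_le _ hjmem) (Ne.symm hne)
    obtain ⟨j', hj'mem, hj'eq⟩ := Finset.exists_mem_eq_inf' (hniso i) (ratio D rstar)
    have hadjij' : G.Adj i j' := (SimpleGraph.mem_neighborFinset _ _ _).mp hj'mem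
    rw [hj'eq] at hlt
    have hab : rstar j' / D j' < rstar j / D j := hlt
    have hjj' : j ≠ j' := by
      rintro rfl
      exact lt_irrefl _ hab
    set ε : ℝ := min (d i j) (D j * ((rstar j / D j - rstar j' / D j') / 2)) with hε
    have hεd : ε ≤ d i j := min_le_left _ _
    have hεpos : 0 < ε := by
      apply lt_min hpos
      apply mul_pos (hD j)
      linarith
    have hεsmall : rstar j' / D j' < rstar j / D j - ε / D j := by
      have h2 : ε ≤ D j * ((rstar j / D j - rstar j' / D j') / 2) := min_le_right _ _
      have h3 : ε / D j ≤ (rstar j / D j - rstar j' / D j') / 2 := by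
        rw [div_le_iff₀ (hD j)]
        linarith [h2, mul_comm (D j) ((rstar j / D j - rstar j' / D j') / 2)]
      linarith
    -- the perturbed allocation
    set r' : V → ℝ := fun k =>
      rstar k + ((if k = j' then ε else 0) - (if k = j then ε else 0)) with hr'
    -- the perturbed flow
    set F : V → V → ℝ := fun p k =>
      if p = i then (if k = j' then ε else 0) - (if k = j then ε else 0) else 0 with hF
    set d2 : V → V → ℝ := fun p k => d p k + F p k with hd2
    have hFval : ∀ p k, p = i → F p k = (if k = j' then ε else 0) - (if k = j then ε else 0) := by
      intro p k hp; simp only [hF]; rw [if_pos hp]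
    have hFval0 : ∀ p k, p ≠ i → F p k = 0 := by
      intro p k hp; simp only [hF]; rw [if_neg hp]
    have hFij : F i j = -ε := by
      rw [hFval i j rfl, if_neg (fun h : (j : V) = j' => hjj' h), if_pos rfl]; ring
    have hFnn : ∀ p k, k ≠ j → 0 ≤ F p k := by
      intro p k hk
      by_cases hp : p = i
      · rw [hFval p k hp, if_neg hk]
        split_ifs <;> linarith
      · rw [hFval0 p k hp]
    have hd2val : ∀ p k, d2 p k = d p k + F p k := fun _ _ => rfl
    have hFrow : ∀ p, ∑ k, F p k = 0 := by
      intro p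
      by_cases hp : p = i
      · rw [Finset.sum_congr rfl (fun k _ => hFval p k hp), Finset.sum_sub_distrib,
          Finset.sum_ite_eq' Finset.univ j' (fun _ => ε),
          Finset.sum_ite_eq' Finset.univ j (fun _ => ε)]
        simp
      · rw [Finset.sum_congr rfl (fun k _ => hFval0 p k hp), Finset.sum_const, smul_zero]
    have hFcol : ∀ k, ∑ p, F p k = (if k = j' then ε else 0) - (if k = j then ε else 0) := by
      intro k
      have h3 : ∀ p : V, F p k
          = if p = i then ((if k = j' then ε else 0) - (if k = j then ε else 0)) else 0 := by
        intro p
        by_cases hp : p = i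
        · rw [hFval p k hp, if_pos hp]
        · rw [hFval0 p k hp, if_neg hp]
      rw [Finset.sum_congr rfl (fun p _ => h3 p),
        Finset.sum_ite_eq' Finset.univ i
          (fun _ : V => (if k = j' then ε else 0) - (if k = j then ε else 0))]
      simp
    have hd2nn : ∀ p k, 0 ≤ d2 p k := by
      intro p k
      rw [hd2val p k]
      by_cases hk : k = j
      · subst hk
        by_cases hp : p = i
        · subst hp; rw [hFij]; linarith
        · rw [hFval0 p k hp]; linarith [hdF.1 p k]
      · linarith [hdF.1 p k, hFnn p k hk]
    have hd2supp : ∀ p k, ¬ G.Adj p k → d2 p k = 0 := by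
      intro p k hna
      rw [hd2val p k, hdF.2.1 p k hna, zero_add]
      by_cases hp : p = i
      · have hkj : k ≠ j := by rintro rfl; rw [hp] at hna; exact hna hadjij
        have hkj' : k ≠ j' := by rintro rfl; rw [hp] at hna; exact hna hadjij'
        rw [hFval p k hp, if_neg hkj', if_neg hkj]; ring
      · exact hFval0 p k hp
    have hd2row : ∀ p, ∑ k, d2 p k ≤ D p := by
      intro p
      rw [Finset.sum_congr rfl (fun k (_ : k ∈ Finset.univ) => hd2val p k),
        Finset.sum_add_distrib, hFrow p, add_zero, hrowD p]
    have hd2col : ∀ k, ∑ p, d2 p k = r' k := by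
      intro k
      rw [Finset.sum_congr rfl (fun p (_ : p ∈ Finset.univ) => hd2val p k),
        Finset.sum_add_distrib, hFcol k, hcolR k]
    have hr'mem : r' ∈ polyA (fS G D) := by
      constructor
      · intro k
        rw [← hd2col k]
        exact Finset.sum_nonneg (fun p _ => hd2nn p k)
      · intro S
        have := flow_le G d2 D hd2nn hd2supp hd2row S
        rw [Finset.sum_congr rfl (fun k (_ : k ∈ S) => (hd2col k).symm)]
        exact this
    have hlexge := hlex.2 r' hr'mem
    have hr'j : r' j = rstar j - ε := by
      have h9 : (if (j:V) = j' then ε else 0) = 0 := if_neg hjj'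
      simp [hr', h9]
      ring
    have hr'j' : r' j' = rstar j' + ε := by
      have h9 : (if (j':V) = j then ε else 0) = 0 := if_neg (fun h => hjj' h.symm)
      simp [hr', h9]
    have hy1 : rstar j' / D j' < r' j' / D j' := by
      rw [hr'j', add_div]
      have := div_pos hεpos (hD j')
      linarith
    have hy3 : rstar j' / D j' < r' j / D j := by
      rw [hr'j, sub_div]
      linarith [hεsmall]
    have hoff : ∀ k, k ≠ j → k ≠ j' →
        (fun k => r' k / D k) k = (fun k => rstar k / D k) k := by
      intro k hk1 hk2
      have hrk : r' k = rstar k := by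
        simp only [hr']; rw [if_neg hk2, if_neg hk1]; ring
      simp only [hrk]
    exact not_lexGE_pair (fun k => rstar k / D k) (fun k => r' k / D k) j j' hjj'
      hy1 hab hy3 hoff hlexge

end SharingEcon
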